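/- Let n ≥ 3 and 2 ≤ p ≤ n. Consider the following 2n−p polynomials in ℝ[x_1, …, x_n]: e_1, …, e_{n−1} (the elementary symmetric polynomials in x_1, …, x_n), κ := x_1 x_2 ⋯ x_{p−1}, and e*_j · κ for j = 1, …, n−p, where e*_j is the j-th elementary symmetric polynomial in x_{p+1}, …, x_n. Then the Jacobian matrix of this family with respect to x_1, …, x_n, viewed as a matrix over the field of rational functions ℝ(x_1, …, x_n), has rank n. -/

import Mathlib

open Finset MvPolynomial

/-- The `m`-th elementary symmetric polynomial of the values `v i` for `i ∈ s`. -/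
noncomputable def esymOn {σ R : Type*} [CommSemiring R] (s : Finset σ) (m : ℕ) (v : σ → R) : R :=
  ∑ t ∈ Finset.powersetCard m s, ∏ i ∈ t, v i

/-- The `2n - p` coefficients of the input-output equation of the `n`-compartment cycle
model with input in compartment `1`, output in compartment `p`, and no leaks:
`e₁, …, e_{n-1}` (elementary symmetric polynomials in all the variables `x₁, …, xₙ`),
`κ = x₁⋯x_{p-1}`, and `e*ⱼ · κ` for `j = 1, …, n - p`, where `e*ⱼ` is the `j`-th elementary
symmetric polynomial in `x_{p+1}, …, xₙ`.  (0-based: variable `i : Fin n` is `x_{i+1}`.) -/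
noncomputable def coeffs2 (n p : ℕ) (m : Fin (2 * n - p)) : MvPolynomial (Fin n) ℝ :=
  if m.1 < n - 1 then
    esymOn Finset.univ (m.1 + 1) (X : Fin n → MvPolynomial (Fin n) ℝ)
  else if m.1 = n - 1 then
    ∏ i ∈ Finset.univ.filter (fun i : Fin n => i.1 < p - 1), X i
  else
    esymOn (Finset.univ.filter (fun i : Fin n => p ≤ i.1)) (m.1 - (n - 1))
        (X : Fin n → MvPolynomial (Fin n) ℝ) *
      ∏ i ∈ Finset.univ.filter (fun i : Fin n => i.1 < p - 1), X i

section lemmas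
variable {σ : Type*} [DecidableEq σ]

/-- pderiv of a product of distinct variables. -/
theorem pderiv_prod_X (i : σ) (t : Finset σ) :
    pderiv i (∏ j ∈ t, (X j : MvPolynomial σ ℝ)) =
      if i ∈ t then ∏ j ∈ t.erase i, (X j : MvPolynomial σ ℝ) else 0 := by
  classical
  induction t using Finset.induction_on with
  | empty => simp
  | @insert j t' hj ih =>
    rw [Finset.prod_insert hj, pderiv_mul, ih]
    by_cases hij : i = j
    · subst hij
      have : i ∉ t' := hj
      simp [pderiv_X_self, this, Finset.erase_insert this]
    · rw [pderiv_X_of_ne (fun h => hij h.symm)]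
      by_cases hit : i ∈ t'
      · simp only [hit, if_true, Finset.mem_insert, hij, or_true, zero_mul, zero_add]
        rw [Finset.erase_insert_of_ne (fun h => hij h.symm),
          Finset.prod_insert (fun h => hj (Finset.mem_of_mem_erase h))]
      · simp [hit, hij]

theorem pderiv_esymOn (i : σ) (s : Finset σ) (m : ℕ) :
    pderiv i (esymOn s (m + 1) (X : σ → MvPolynomial σ ℝ)) =
      if i ∈ s then esymOn (s.erase i) m (X : σ → MvPolynomial σ ℝ) else 0 := by
  classical
  unfold esymOn
  rw [map_sum]
  by_cases his : i ∈ s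
  · rw [if_pos his]
    have hps : s.powersetCard (m+1) = (s.erase i).powersetCard (m+1) ∪
        ((s.erase i).powersetCard m).image (insert i) := by
      conv_lhs => rw [← Finset.insert_erase his]
      exact Finset.powersetCard_succ_insert (Finset.notMem_erase i s) m
    rw [hps, Finset.sum_union ?hdisj, Finset.sum_image ?hinj]
    · have h1 : ∀ t ∈ (s.erase i).powersetCard (m+1),
          pderiv i (∏ j ∈ t, (X j : MvPolynomial σ ℝ)) = 0 := by
        intro t ht
        rw [pderiv_prod_X, if_neg]
        intro hit
        exact Finset.notMem_erase i s ((Finset.mem_powersetCard.1 ht).1 hit)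
      rw [Finset.sum_congr rfl h1, Finset.sum_const_zero, zero_add]
      refine Finset.sum_congr rfl fun t ht => ?_
      have hit : i ∉ t := fun h =>
        Finset.notMem_erase i s ((Finset.mem_powersetCard.1 ht).1 h)
      rw [pderiv_prod_X, if_pos (Finset.mem_insert_self i t), Finset.erase_insert hit]
    case hinj =>
      intro t1 h1 t2 h2 he
      have hi1 : i ∉ t1 := fun h =>
        Finset.notMem_erase i s ((Finset.mem_powersetCard.1 h1).1 h)
      have hi2 : i ∉ t2 := fun h =>
        Finset.notMem_erase i s ((Finset.mem_powersetCard.1 h2).1 h)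
      have := congrArg (fun u => Finset.erase u i) he
      simpa [Finset.erase_insert hi1, Finset.erase_insert hi2] using this
    case hdisj =>
      rw [Finset.disjoint_left]
      intro t ht1 ht2
      obtain ⟨u, hu, rfl⟩ := Finset.mem_image.1 ht2
      exact Finset.notMem_erase i s ((Finset.mem_powersetCard.1 ht1).1
        (Finset.mem_insert_self i u))
  · rw [if_neg his]
    refine Finset.sum_eq_zero fun t ht => ?_
    rw [pderiv_prod_X, if_neg]
    exact fun h => his ((Finset.mem_powersetCard.1 ht).1 h)

theorem eval_esymOn (a : σ → ℝ) (s : Finset σ) (m : ℕ) :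
    eval a (esymOn s m (X : σ → MvPolynomial σ ℝ)) = esymOn s m a := by
  unfold esymOn
  rw [map_sum]
  exact Finset.sum_congr rfl fun t _ => by rw [map_prod]; simp

theorem esymOn_erase_of_zero {s : Finset σ} {i0 : σ} (hi : i0 ∈ s) (v : σ → ℝ)
    (hv : v i0 = 0) (m : ℕ) : esymOn s m v = esymOn (s.erase i0) m v := by
  unfold esymOn
  refine (Finset.sum_subset (Finset.powersetCard_mono (Finset.erase_subset i0 s)) ?_).symm
  intro t ht hnt
  have h1 := (Finset.mem_powersetCard.1 ht).1
  have h2 := (Finset.mem_powersetCard.1 ht).2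
  have hi0t : i0 ∈ t := by
    by_contra h
    exact hnt (Finset.mem_powersetCard.2 ⟨fun x hx =>
      Finset.mem_erase.2 ⟨fun he => h (he ▸ hx), h1 hx⟩, h2⟩)
  exact Finset.prod_eq_zero hi0t hv

theorem esymOn_map {τ : Type*} [DecidableEq τ] (f : σ ↪ τ) (s : Finset σ) (m : ℕ)
    (v : τ → ℝ) : esymOn (s.map f) m v = esymOn s m (v ∘ f) := by
  unfold esymOn
  rw [Finset.powersetCard_map, Finset.sum_map]
  exact Finset.sum_congr rfl fun t _ => Finset.prod_map t f v

theorem esymOn_neg (s : Finset σ) (m : ℕ) (v : σ → ℝ) :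
    esymOn s m (fun i => -v i) = (-1) ^ m * esymOn s m v := by
  unfold esymOn
  rw [Finset.mul_sum]
  refine Finset.sum_congr rfl fun t ht => ?_
  have hc : t.card = m := (Finset.mem_powersetCard.1 ht).2
  calc ∏ i ∈ t, -v i = ∏ i ∈ t, ((-1) * v i) := by simp
    _ = (-1) ^ m * ∏ i ∈ t, v i := by
        rw [Finset.prod_mul_distrib, Finset.prod_const, hc]

end lemmas

/-- Key lemma: the matrix `(k, i) ↦ e_k(y \ y_i)` is nonsingular for distinct `y`. -/
theorem det_esymOn_ne_zero (N : ℕ) (y : Fin N → ℝ) (hy : Function.Injective y) :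
    (Matrix.of fun k i : Fin N =>
      esymOn (Finset.univ.erase i) k.1 y).det ≠ 0 := by
  classical
  cases N with
  | zero => simp [Matrix.det_fin_zero]
  | succ N' =>
  set E : Matrix (Fin (N' + 1)) (Fin (N' + 1)) ℝ :=
    Matrix.of fun k i => esymOn (Finset.univ.erase i) k.1 y with hE
  set q : Fin (N' + 1) → Polynomial ℝ :=
    fun i => ∏ j ∈ Finset.univ.erase i, (Polynomial.X + Polynomial.C (-(y j))) with hq
  have hcard : ∀ i : Fin (N' + 1), (Finset.univ.erase i).card = N' := by
    intro i
    rw [Finset.card_erase_of_mem (Finset.mem_univ i), Finset.card_univ, Fintype.card_fin]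
    rfl
  have hdeg : ∀ i, (q i).natDegree = N' := by
    intro i
    rw [hq]
    rw [Polynomial.natDegree_prod_of_monic _ _
      (fun j _ => by simpa [sub_eq_add_neg] using Polynomial.monic_X_sub_C (y j))]
    rw [Finset.sum_congr rfl fun j _ => Polynomial.natDegree_X_add_C (-(y j)),
      Finset.sum_const, hcard i, smul_eq_mul, mul_one]
  have heval : ∀ k i : Fin (N' + 1),
      Polynomial.eval (y k) (q i) = ∏ j ∈ Finset.univ.erase i, (y k - y j) := by
    intro k i
    rw [hq]
    rw [Polynomial.eval_prod]
    exact Finset.prod_congr rfl fun j _ => by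
      simp [sub_eq_add_neg]
  set B : Matrix (Fin (N' + 1)) (Fin (N' + 1)) ℝ :=
    Matrix.of fun m i => (q i).coeff m.1 with hB
  set d : Fin (N' + 1) → ℝ := fun i => ∏ j ∈ Finset.univ.erase i, (y i - y j) with hd
  have hdiag : Matrix.vandermonde y * B = Matrix.diagonal d := by
    ext k i
    rw [Matrix.mul_apply]
    have : ∑ m : Fin (N' + 1), Matrix.vandermonde y k m * B m i
        = Polynomial.eval (y k) (q i) := by
      rw [Polynomial.eval_eq_sum_range' (n := N' + 1) (by rw [hdeg i]; omega) (y k),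
        ← Fin.sum_univ_eq_sum_range]
      exact Finset.sum_congr rfl fun m _ => by
        simp [Matrix.vandermonde, hB, mul_comm]
    rw [this, heval k i]
    by_cases hki : k = i
    · subst hki
      simp [Matrix.diagonal, hd]
    · rw [Matrix.diagonal_apply_ne _ hki]
      exact Finset.prod_eq_zero (Finset.mem_erase.2 ⟨hki, Finset.mem_univ k⟩) (sub_self (y k))
  have hdne : ∀ i, d i ≠ 0 := by
    intro i
    rw [hd]
    exact Finset.prod_ne_zero_iff.2 fun j hj =>
      sub_ne_zero.2 fun h => (Finset.mem_erase.1 hj).1 (hy h.symm)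
  have hdetB : B.det ≠ 0 := by
    intro h0
    have := congrArg Matrix.det hdiag
    rw [Matrix.det_mul, h0, mul_zero, Matrix.det_diagonal] at this
    exact Finset.prod_ne_zero_iff.2 (fun i _ => hdne i) this.symm
  -- relate B and E
  have hBE : B = Matrix.diagonal (fun m : Fin (N' + 1) => ((-1 : ℝ)) ^ (N' - m.1)) *
      E.submatrix Fin.revPerm id := by
    ext m i
    rw [Matrix.diagonal_mul]
    have hm : m.1 ≤ N' := Nat.lt_succ_iff.1 m.2
    have := Finset.prod_X_add_C_coeff (Finset.univ.erase i) (fun j => -(y j))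
      (k := m.1) (by rw [hcard i]; exact hm)
    rw [hB]
    simp only [Matrix.of_apply]
    rw [show ((q i).coeff m.1) = _ from this, hcard i]
    have : ∑ t ∈ (Finset.univ.erase i).powersetCard (N' - m.1), ∏ j ∈ t, -(y j)
        = esymOn (Finset.univ.erase i) (N' - m.1) (fun j => -(y j)) := rfl
    rw [this, esymOn_neg]
    have hrev : ((Fin.revPerm m : Fin (N' + 1))).1 = N' - m.1 := by
      rw [show (Fin.revPerm m : Fin (N' + 1)) = Fin.rev m from rfl, Fin.val_rev]
      omega
    rw [hE]
    simp only [Matrix.submatrix_apply, Matrix.of_apply, id_eq, hrev]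
  rw [hBE] at hdetB
  intro h0
  apply hdetB
  rw [Matrix.det_mul, show E.submatrix (Fin.revPerm : Equiv.Perm (Fin (N' + 1))) id
    = E.submatrix Fin.revPerm id from rfl, Matrix.det_permute, h0]
  ring

theorem det_spec (n p : ℕ) (hn : 3 ≤ n) (hp : 2 ≤ p) (hpn : p ≤ n)
    (hle : ∀ k : Fin n, k.1 < 2 * n - p) :
    (Matrix.of fun k i : Fin n => eval (fun i : Fin n => (i.1 : ℝ))
      (pderiv i (coeffs2 n p ⟨k.1, hle k⟩))).det ≠ 0 := by
  classical
  obtain ⟨N, rfl⟩ : ∃ N, n = N + 1 := ⟨n - 1, by omega⟩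
  have hN : 2 ≤ N := by omega
  set a : Fin (N + 1) → ℝ := fun i => (i.1 : ℝ) with ha
  set R : Matrix (Fin (N + 1)) (Fin (N + 1)) ℝ :=
    Matrix.of fun k i => eval a (pderiv i (coeffs2 (N + 1) p ⟨k.1, hle k⟩)) with hR
  set F : Finset (Fin (N + 1)) := Finset.univ.filter (fun i => i.1 < p - 1) with hF
  have h0F : (0 : Fin (N + 1)) ∈ F := by
    simp [hF]; omega
  -- row entries for k < N
  have fact1 : ∀ (k i : Fin (N + 1)), k.1 < N →
      R k i = esymOn (Finset.univ.erase i) k.1 a := by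
    intro k i hk
    rw [hR]
    simp only [Matrix.of_apply, coeffs2]
    rw [if_pos (by simpa using hk)]
    rw [pderiv_esymOn, if_pos (Finset.mem_univ i), eval_esymOn]
  -- last row
  have fact2 : ∀ i : Fin (N + 1),
      R (Fin.last N) i = if i ∈ F then ∏ j ∈ F.erase i, a j else 0 := by
    intro i
    rw [hR]
    simp only [Matrix.of_apply, coeffs2]
    rw [if_neg (by simp), if_pos (by simp), ← hF, pderiv_prod_X]
    by_cases hiF : i ∈ F
    · rw [if_pos hiF, if_pos hiF, map_prod]
      exact Finset.prod_congr rfl fun j _ => by simp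
    · rw [if_neg hiF, if_neg hiF, map_zero]
  have fact2' : ∀ i : Fin (N + 1), i ≠ 0 → R (Fin.last N) i = 0 := by
    intro i hi
    rw [fact2 i]
    by_cases hiF : i ∈ F
    · rw [if_pos hiF]
      refine Finset.prod_eq_zero (Finset.mem_erase.2 ⟨Ne.symm hi, h0F⟩) ?_
      simp [ha]
    · rw [if_neg hiF]
  set c : ℝ := ∏ j ∈ F.erase 0, a j with hc
  have hcne : c ≠ 0 := by
    rw [hc]
    refine Finset.prod_ne_zero_iff.2 fun j hj => ?_
    have hj0 : j ≠ 0 := (Finset.mem_erase.1 hj).1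
    simp only [ha]
    exact_mod_cast fun h => hj0 (by exact_mod_cast h)
  -- expand along the last row
  rw [show R.det = _ from Matrix.det_succ_row R (Fin.last N)]
  rw [Finset.sum_eq_single_of_mem (0 : Fin (N + 1)) (Finset.mem_univ 0)
    (fun j _ hj => by rw [fact2' j hj]; ring)]
  have hR0 : R (Fin.last N) 0 = c := by rw [fact2 0, if_pos h0F, hc]
  rw [hR0]
  -- the minor
  set M' : Matrix (Fin N) (Fin N) ℝ :=
    R.submatrix (Fin.last N).succAbove (0 : Fin (N + 1)).succAbove with hM'
  set y : Fin N → ℝ := fun j => (j.1 : ℝ) + 1 with hy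
  have hyinj : Function.Injective y := by
    intro u v huv
    simp only [hy] at huv
    have : (u.1 : ℝ) = v.1 := by linarith
    exact Fin.ext (by exact_mod_cast this)
  have hM'eq : M' = Matrix.of fun k j : Fin N => esymOn (Finset.univ.erase j) k.1 y := by
    ext k j
    rw [hM']
    simp only [Matrix.submatrix_apply, Fin.succAbove_last, Fin.succAbove_zero]
    rw [fact1 k.castSucc j.succ (by simpa using k.2)]
    have h0mem : (0 : Fin (N + 1)) ∈ Finset.univ.erase j.succ :=
      Finset.mem_erase.2 ⟨(Fin.succ_ne_zero j).symm, Finset.mem_univ 0⟩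
    rw [esymOn_erase_of_zero h0mem a (by simp [ha]) _]
    have humap : (Finset.univ : Finset (Fin (N + 1))).erase 0
        = Finset.univ.map (Fin.succEmb N) := by
      rw [Fin.univ_succ, Finset.erase_cons]
      rfl
    have hset : (Finset.univ.erase j.succ).erase 0
        = ((Finset.univ.erase j).map (Fin.succEmb N)) := by
      rw [Finset.map_erase, ← humap, Finset.erase_right_comm]
      rfl
    rw [hset, esymOn_map]
    exact congrArg (esymOn (Finset.univ.erase j) k.1) (funext fun u => by
      show (((u.succ : Fin (N + 1)).1 : ℕ) : ℝ) = y u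
      simp only [Fin.val_succ, hy]
      push_cast
      ring)
  have hdetM' : M'.det ≠ 0 := by
    rw [hM'eq]
    exact det_esymOn_ne_zero N y hyinj
  simp only [Fin.val_last, Fin.val_zero, add_zero]
  intro h0
  rcases mul_eq_zero.1 h0 with h | h
  · rcases mul_eq_zero.1 h with h' | h'
    · exact (pow_ne_zero N (by norm_num : (-1 : ℝ) ≠ 0)) h'
    · exact hcne h'
  · exact hdetM' h

theorem rank_submatrix_rows_le {K : Type*} [Field K] {k l m : Type*} [Fintype k] [Fintype l]
    [Fintype m] (A : Matrix k l K) (f : m → k) : (A.submatrix f id).rank ≤ A.rank := by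
  rw [Matrix.rank, Matrix.rank,
    show (A.submatrix f id).mulVecLin = LinearMap.funLeft K K f ∘ₗ A.mulVecLin by
      have := Matrix.mulVecLin_submatrix f (Equiv.refl l) A
      simp at this; rw [this]; rfl]
  rw [LinearMap.range_comp]
  exact (Submodule.finrank_map_le _ _).trans le_rfl

/-- The Jacobian matrix of the coefficient map of the cycle model (input in compartment 1,
output in compartment `p ≥ 2`, no leaks), viewed over the field of rational functions
`ℝ(x₁, …, xₙ)`, has full rank `n`. -/
theorem stmt2 (n p : ℕ) (hn : 3 ≤ n) (hp : 2 ≤ p) (hpn : p ≤ n) :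
    (Matrix.of fun (m : Fin (2 * n - p)) (i : Fin n) =>
        algebraMap (MvPolynomial (Fin n) ℝ) (FractionRing (MvPolynomial (Fin n) ℝ))
          (pderiv i (coeffs2 n p m))).rank = n := by
  classical
  set K := FractionRing (MvPolynomial (Fin n) ℝ)
  set M : Matrix (Fin (2 * n - p)) (Fin n) K :=
    Matrix.of fun m i => algebraMap (MvPolynomial (Fin n) ℝ) K
      (pderiv i (coeffs2 n p m)) with hM
  have hle : ∀ k : Fin n, k.1 < 2 * n - p := fun k => by have := k.2; omega
  set g : Fin n → Fin (2 * n - p) := fun k => ⟨k.1, hle k⟩ with hg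
  set Q : Matrix (Fin n) (Fin n) (MvPolynomial (Fin n) ℝ) :=
    Matrix.of fun k i => pderiv i (coeffs2 n p (g k)) with hQ
  set a : Fin n → ℝ := fun i => (i.1 : ℝ) with ha2
  have hdetR := det_spec n p hn hp hpn hle
  have hdetQ : Q.det ≠ 0 := by
    intro h0
    apply hdetR
    have hmap : (Matrix.of fun k i : Fin n => eval a (pderiv i (coeffs2 n p ⟨k.1, hle k⟩)))
        = Q.map (eval a) := rfl
    rw [hmap, ← RingHom.mapMatrix_apply, ← RingHom.map_det, h0, map_zero]
  have hdetS : (M.submatrix g id).det ≠ 0 := by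
    have hmap : M.submatrix g id = Q.map (algebraMap (MvPolynomial (Fin n) ℝ) K) := rfl
    rw [hmap, ← RingHom.mapMatrix_apply, ← RingHom.map_det]
    intro h0
    exact hdetQ (IsFractionRing.injective (MvPolynomial (Fin n) ℝ) K (by rw [h0, map_zero]))
  have hunit : IsUnit (M.submatrix g id) :=
    (Matrix.isUnit_iff_isUnit_det _).2 (isUnit_iff_ne_zero.2 hdetS)
  have hrankS : (M.submatrix g id).rank = n := by
    rw [Matrix.rank_of_isUnit _ hunit, Fintype.card_fin]
  refine le_antisymm ?_ ?_
  · simpa using Matrix.rank_le_card_width M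
  · calc (n : ℕ) = (M.submatrix g id).rank := hrankS.symm
      _ ≤ M.rank := rank_submatrix_rows_le M g
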